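/- For every real number x with 0 ≤ x < 1, the weighted integral (2/π) ∫₀^π log(1 − 2x·cos θ + x²) · sin²θ dθ equals x²/2. -/

import Mathlib

open Real MeasureTheory Complex

lemma intcos (c : ℝ) (hc : c ≠ 0) :
    ∫ θ in (0:ℝ)..Real.pi, Real.cos (c * θ) = Real.sin (c * Real.pi) / c := by
  have := intervalIntegral.integral_comp_mul_left (a := (0:ℝ)) (b := Real.pi)
    (fun t => Real.cos t) hc
  simp only [integral_cos, mul_zero, Real.sin_zero, sub_zero, smul_eq_mul] at this
  rw [this]; field_simp

lemma trigid (n : ℕ) (θ : ℝ) :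
    Real.cos (n * θ) * Real.sin θ ^ 2 =
      (1/2) * Real.cos (n * θ) - (1/4) * Real.cos (((n:ℝ) + 2) * θ)
        - (1/4) * Real.cos (((n:ℝ) - 2) * θ) := by
  have h1 : ((n:ℝ) + 2) * θ = n * θ + 2 * θ := by ring
  have h2 : ((n:ℝ) - 2) * θ = n * θ - 2 * θ := by ring
  rw [h1, h2, Real.cos_add, Real.cos_sub, Real.cos_two_mul, Real.sin_two_mul]
  linear_combination Real.cos (n*θ) * Real.sin_sq_add_cos_sq θ

lemma intT (n : ℕ) (hn : n ≠ 0) :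
    ∫ θ in (0:ℝ)..Real.pi, Real.cos (n * θ) * Real.sin θ ^ 2
      = if n = 2 then -(Real.pi/4) else 0 := by
  rw [intervalIntegral.integral_congr (g := fun θ =>
      (1/2) * Real.cos ((n:ℝ) * θ) - (1/4) * Real.cos (((n:ℝ)+2) * θ)
        - (1/4) * Real.cos (((n:ℝ)-2) * θ)) (fun θ _ => trigid n θ)]
  have c1 : Continuous fun θ : ℝ => (1/2) * Real.cos ((n:ℝ) * θ) := by fun_prop
  have c2 : Continuous fun θ : ℝ => (1/4) * Real.cos (((n:ℝ)+2) * θ) := by fun_prop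
  have c3 : Continuous fun θ : ℝ => (1/4) * Real.cos (((n:ℝ)-2) * θ) := by fun_prop
  rw [intervalIntegral.integral_sub ((c1.intervalIntegrable _ _).sub (c2.intervalIntegrable _ _)) (c3.intervalIntegrable _ _),
    intervalIntegral.integral_sub (c1.intervalIntegrable _ _) (c2.intervalIntegrable _ _),
    intervalIntegral.integral_const_mul, intervalIntegral.integral_const_mul,
    intervalIntegral.integral_const_mul]
  have hn' : (n:ℝ) ≠ 0 := Nat.cast_ne_zero.mpr hn
  have e1 : ∫ θ in (0:ℝ)..Real.pi, Real.cos ((n:ℝ) * θ) = 0 := by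
    rw [intcos _ hn', Real.sin_nat_mul_pi, zero_div]
  have e2 : ∫ θ in (0:ℝ)..Real.pi, Real.cos (((n:ℝ)+2) * θ) = 0 := by
    rw [intcos _ (by positivity)]
    have : ((n:ℝ)+2) = ((n+2 : ℕ) : ℝ) := by push_cast; ring
    rw [this, Real.sin_nat_mul_pi, zero_div]
  rw [e1, e2]
  by_cases h2 : n = 2
  · subst h2
    norm_num; ring
  · have hne : ((n:ℝ) - 2) ≠ 0 := by
      intro h
      exact h2 (by exact_mod_cast sub_eq_zero.mp h)
    have e3 : ∫ θ in (0:ℝ)..Real.pi, Real.cos (((n:ℝ)-2) * θ) = 0 := by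
      rw [intcos _ hne]
      have : ((n:ℝ)-2) = (((n:ℤ) - 2 : ℤ) : ℝ) := by push_cast; ring
      rw [this, Real.sin_int_mul_pi, zero_div]
    rw [e3]; simp [h2]

lemma pointSum (x : ℝ) (hx0 : 0 ≤ x) (hx1 : x < 1) (θ : ℝ) :
    HasSum (fun n : ℕ => (-2) * (x ^ n * Real.cos (n * θ) / n) * Real.sin θ ^ 2)
      (Real.log (1 - 2 * x * Real.cos θ + x ^ 2) * Real.sin θ ^ 2) := by
  set z : ℂ := (x : ℂ) * Complex.exp (θ * Complex.I) with hz
  have hnorm : ‖z‖ < 1 := by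
    rw [hz, norm_mul, Complex.norm_exp_ofReal_mul_I]
    simpa [_root_.abs_of_nonneg hx0] using hx1
  have h := (hasSum_taylorSeries_neg_log hnorm).mapL Complex.reCLM
  have hre : ∀ n : ℕ, Complex.reCLM (z ^ n / n) = x ^ n * Real.cos (n * θ) / n := by
    intro n
    have hzn : z ^ n = ((x ^ n : ℝ) : ℂ) * Complex.exp ((n * θ : ℝ) * Complex.I) := by
      rw [hz, mul_pow, ← Complex.exp_nat_mul]
      push_cast
      ring_nf
    simp only [Complex.reCLM_apply]
    rw [div_natCast_re, hzn, Complex.re_ofReal_mul, Complex.exp_ofReal_mul_I_re]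
  have habs : Real.log (1 - 2 * x * Real.cos θ + x ^ 2)
      = 2 * Real.log ‖1 - z‖ := by
    have : 1 - 2 * x * Real.cos θ + x ^ 2 = ‖1 - z‖ ^ 2 := by
      rw [Complex.sq_norm, Complex.normSq_apply]
      have hrere : (1 - z).re = 1 - x * Real.cos θ := by
        simp [hz, Complex.exp_ofReal_mul_I_re]
      have him : (1 - z).im = -(x * Real.sin θ) := by
        simp [hz, Complex.exp_ofReal_mul_I_im]
      rw [hrere, him]
      have := Real.sin_sq_add_cos_sq θ
      nlinarith [this]
    rw [this, Real.log_pow]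
    push_cast; ring
  have hval : Complex.reCLM (-Complex.log (1 - z)) = -(Real.log ‖1 - z‖) := by
    simp [Complex.log_re]
  rw [hval] at h
  simp only [hre] at h
  have h2 := h.mul_left ((-2) * Real.sin θ ^ 2)
  rw [habs]
  convert h2 using 1
  · rfl
  · funext n; ring
  · ring

theorem stmt_0 (x : ℝ) (hx0 : 0 ≤ x) (hx1 : x < 1) :
    (2 / Real.pi) *
        ∫ θ in (0:ℝ)..Real.pi,
          Real.log (1 - 2 * x * Real.cos θ + x ^ 2) * (Real.sin θ) ^ 2
      = x ^ 2 / 2 := by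
  have hπ := Real.pi_pos
  set μ : Measure ℝ := volume.restrict (Set.Ioc (0:ℝ) Real.pi) with hμdef
  set F : ℕ → ℝ → ℝ := fun n θ => (-2) * (x ^ n * Real.cos (n * θ) / n) * Real.sin θ ^ 2
    with hFdef
  have hcont : ∀ n, Continuous (F n) := by
    intro n; simp only [hFdef]; fun_prop
  have hint : ∀ n, Integrable (F n) μ := fun n => (hcont n).integrableOn_Ioc
  have hbound : ∀ n θ, ‖F n θ‖ ≤ 2 * x ^ n := by
    intro n θ
    rcases Nat.eq_zero_or_pos n with rfl | hn
    · simp [hFdef]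
    have h1 : |Real.cos (n*θ)| ≤ 1 := Real.abs_cos_le_one _
    have h2 : Real.sin θ ^ 2 ≤ 1 := Real.sin_sq_le_one _
    have hxc : |x ^ n * Real.cos ((n:ℝ)*θ) / n| ≤ x ^ n := by
      rw [abs_div, abs_mul, _root_.abs_of_nonneg (pow_nonneg hx0 n), Nat.abs_cast]
      have hle : x ^ n * |Real.cos ((n:ℝ)*θ)| ≤ x ^ n := by
        nlinarith [pow_nonneg hx0 n, abs_nonneg (Real.cos ((n:ℝ)*θ))]
      have : x ^ n * |Real.cos ((n:ℝ)*θ)| / n ≤ x ^ n * |Real.cos ((n:ℝ)*θ)| := by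
        apply div_le_self (by positivity)
        exact_mod_cast hn
      linarith
    calc ‖F n θ‖ = 2 * |x ^ n * Real.cos ((n:ℝ)*θ) / n| * Real.sin θ ^ 2 := by
          simp only [hFdef, Real.norm_eq_abs, abs_mul]
          rw [_root_.abs_of_nonneg (sq_nonneg (Real.sin θ))]
          norm_num
      _ ≤ 2 * x ^ n * 1 := by
          apply mul_le_mul _ h2 (sq_nonneg _) (by positivity)
          nlinarith [abs_nonneg (x ^ n * Real.cos ((n:ℝ)*θ) / n)]
      _ = 2 * x ^ n := by ring
  have hμuniv : (μ Set.univ).toReal = Real.pi := by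
    simp [hμdef, Real.volume_Ioc, hπ.le]
  have hgsum : Summable (fun n : ℕ => Real.pi * (2 * x ^ n)) := by
    simpa [mul_assoc] using (summable_geometric_of_lt_one hx0 hx1).mul_left (Real.pi * 2)
  have hsummable : Summable fun n => ∫ θ, ‖F n θ‖ ∂μ := by
    refine Summable.of_nonneg_of_le
      (fun n => integral_nonneg fun θ => norm_nonneg _) (fun n => ?_) hgsum
    calc ∫ θ, ‖F n θ‖ ∂μ ≤ ∫ _θ, 2 * x ^ n ∂μ := by
          apply integral_mono (hint n).norm (integrable_const _)
          exact fun θ => hbound n θ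
      _ = Real.pi * (2 * x ^ n) := by rw [integral_const, measureReal_def, hμuniv, smul_eq_mul]
  have hkey := MeasureTheory.hasSum_integral_of_summable_integral_norm hint hsummable
  have htsum : ∀ θ : ℝ, ∑' n, F n θ
      = Real.log (1 - 2 * x * Real.cos θ + x ^ 2) * Real.sin θ ^ 2 :=
    fun θ => (pointSum x hx0 hx1 θ).tsum_eq
  have hFint : ∀ n, ∫ θ, F n θ ∂μ = if n = 2 then Real.pi * x ^ 2 / 4 else 0 := by
    intro n
    rw [hμdef, ← intervalIntegral.integral_of_le hπ.le]
    rcases Nat.eq_zero_or_pos n with rfl | hn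
    · simp [hFdef]
    have hid : ∀ θ ∈ Set.uIcc (0:ℝ) Real.pi, F n θ
        = ((-2) * x ^ n / n) * (Real.cos ((n:ℝ) * θ) * Real.sin θ ^ 2) := by
      intro θ _; simp only [hFdef]; ring
    rw [intervalIntegral.integral_congr hid, intervalIntegral.integral_const_mul,
      intT n hn.ne']
    by_cases h2 : n = 2
    · subst h2; simp; ring
    · simp [h2]
  have hI : ∫ θ in (0:ℝ)..Real.pi,
      Real.log (1 - 2 * x * Real.cos θ + x ^ 2) * (Real.sin θ) ^ 2
      = Real.pi * x ^ 2 / 4 := by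
    rw [intervalIntegral.integral_of_le hπ.le]
    have : ∫ θ, Real.log (1 - 2 * x * Real.cos θ + x ^ 2) * Real.sin θ ^ 2 ∂μ
        = ∑' n, ∫ θ, F n θ ∂μ := by
      rw [hkey.tsum_eq]
      exact integral_congr_ae (Filter.Eventually.of_forall fun θ => (htsum θ).symm)
    rw [hμdef] at this
    rw [this]
    rw [← hμdef]
    rw [tsum_eq_single 2 (fun n hn => by rw [hFint n]; simp [hn])]
    rw [hFint 2]; simp
  rw [hI]
  field_simp
  ring
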